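/- Fix an integer j ≥ 1 and let M : ℓ∞ → ℓ∞ be the multiplication operator defined by (M x)_m = (1 − 1/m)^{2j} · x_m for m ≥ 1. Then M is a positive bounded linear operator with ‖M‖ ≤ 1, its only fixed point is 0, and M is not mean ergodic: there exists x ∈ ℓ∞ for which the Cesàro means (1/n) · Σ_{k=0}^{n-1} M^k x do not converge in norm. -/

import Mathlib

open Filter BoundedContinuousFunction

/-- Fix `j ≥ 1` and let `M` be the multiplication operator on `ℓ∞`
(modelled as `ℕ →ᵇ ℝ`, the index `m ∈ ℕ` corresponding to `m + 1`) given by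
`(M x)_m = (1 − 1/m)^{2j} · x_m`. Then `M` is a positive bounded linear operator with
`‖M‖ ≤ 1`, its only fixed point is `0`, and `M` is not mean ergodic: for some `x` the
Cesàro means `(1/n) ∑_{k<n} M^k x` do not converge in norm. -/
theorem multiplication_operator_not_mean_ergodic
    (j : ℕ) (hj : 1 ≤ j)
    (M : (ℕ →ᵇ ℝ) →L[ℝ] (ℕ →ᵇ ℝ))
    (hM : ∀ (x : ℕ →ᵇ ℝ) (m : ℕ), M x m = (1 - 1 / (m + 1 : ℝ)) ^ (2 * j) * x m) :
    (∀ x : ℕ →ᵇ ℝ, 0 ≤ x → 0 ≤ M x) ∧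
    ‖M‖ ≤ 1 ∧
    (∀ x : ℕ →ᵇ ℝ, M x = x → x = 0) ∧
    (∃ x : ℕ →ᵇ ℝ, ¬ ∃ y : ℕ →ᵇ ℝ,
      Tendsto (fun n : ℕ => (n : ℝ)⁻¹ • ∑ k ∈ Finset.range n, (M ^ k) x) atTop (nhds y)) := by
  set b : ℕ → ℝ := fun m => 1 - 1 / (m + 1 : ℝ) with hb
  have hbpos : ∀ m : ℕ, (0:ℝ) < (m:ℝ) + 1 := fun m => by positivity
  have hb0 : ∀ m, 0 ≤ b m := by
    intro m
    have : 1 / ((m:ℝ) + 1) ≤ 1 := by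
      rw [div_le_one (hbpos m)]; linarith [Nat.cast_nonneg (α := ℝ) m]
    simp only [hb]; linarith
  have hb1 : ∀ m, b m < 1 := by
    intro m
    have : 0 < 1 / ((m:ℝ) + 1) := by positivity
    simp only [hb]; linarith
  set a : ℕ → ℝ := fun m => b m ^ (2 * j) with ha
  have ha0 : ∀ m, 0 ≤ a m := fun m => pow_nonneg (hb0 m) _
  have ha1 : ∀ m, a m < 1 := fun m =>
    pow_lt_one₀ (hb0 m) (hb1 m) (by omega)
  have hale : ∀ m, a m ≤ 1 := fun m => (ha1 m).le
  have hMk : ∀ (k : ℕ) (x : ℕ →ᵇ ℝ) (m : ℕ), (M ^ k) x m = a m ^ k * x m := by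
    intro k
    induction k with
    | zero => intro x m; simp
    | succ k ih =>
      intro x m
      have : (M ^ (k+1)) x = (M ^ k) (M x) := by
        rw [pow_succ]; rfl
      rw [this, ih, hM, pow_succ]
      ring
  refine ⟨?_, ?_, ?_, ?_⟩
  · intro x hx
    intro m
    have hxm : 0 ≤ x m := hx m
    show (0 : ℕ →ᵇ ℝ) m ≤ M x m
    have h0 : (0 : ℕ →ᵇ ℝ) m = 0 := rfl
    rw [h0, hM]
    exact mul_nonneg (pow_nonneg (hb0 m) _) hxm
  · refine ContinuousLinearMap.opNorm_le_bound M zero_le_one (fun x => ?_)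
    rw [one_mul]
    refine (norm_le (norm_nonneg x)).2 (fun m => ?_)
    rw [hM]
    calc ‖a m * x m‖ = a m * ‖x m‖ := by
          rw [norm_mul, Real.norm_of_nonneg (ha0 m)]
      _ ≤ 1 * ‖x‖ := mul_le_mul (hale m) (norm_coe_le_norm x m) (norm_nonneg _) zero_le_one
      _ = ‖x‖ := one_mul _
  · intro x hfix
    ext m
    have := congrArg (fun f : ℕ →ᵇ ℝ => f m) hfix
    simp only [hM] at this
    have h2 : a m * x m = x m := this
    have h1 : (a m - 1) * x m = 0 := by linear_combination h2
    have : x m = 0 := by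
      rcases mul_eq_zero.1 h1 with h | h
      · exact absurd h (by intro h'; have := ha1 m; linarith [sub_eq_zero.1 h'])
      · exact h
    simpa using this
  · refine ⟨1, ?_⟩
    rintro ⟨y, hy⟩
    set A : ℕ → ℕ →ᵇ ℝ := fun n => (n : ℝ)⁻¹ • ∑ k ∈ Finset.range n, (M ^ k) (1 : ℕ →ᵇ ℝ) with hA
    have hApt : ∀ n m, A n m = (n : ℝ)⁻¹ * ∑ k ∈ Finset.range n, a m ^ k := by
      intro n m
      simp only [hA, coe_smul, Pi.smul_apply, smul_eq_mul]
      congr 1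
      rw [show ((∑ k ∈ Finset.range n, (M ^ k) (1 : ℕ →ᵇ ℝ)) : ℕ →ᵇ ℝ) m
          = ∑ k ∈ Finset.range n, ((M ^ k) (1 : ℕ →ᵇ ℝ)) m by
        rw [coe_sum]; simp]
      refine Finset.sum_congr rfl (fun k _ => ?_)
      rw [hMk]; simp
    -- pointwise limit is 0
    have hy0 : y = 0 := by
      ext m
      have hev : Tendsto (fun n => A n m) atTop (nhds (y m)) :=
        ((continuous_eval_const (F := ℕ →ᵇ ℝ) (x := m)).tendsto y).comp hy
      have hlim0 : Tendsto (fun n => A n m) atTop (nhds 0) := by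
        have hub : ∀ n : ℕ, A n m ≤ (1 - a m)⁻¹ / n := by
          intro n
          rw [hApt, div_eq_inv_mul]
          refine mul_le_mul_of_nonneg_left ?_ (by positivity)
          calc ∑ k ∈ Finset.range n, a m ^ k
              = (1 - a m ^ n) / (1 - a m) := by
                rw [geom_sum_eq (ne_of_lt (ha1 m)), div_eq_div_iff] <;>
                  nlinarith [ha1 m]
            _ ≤ 1 / (1 - a m) := by
                gcongr
                · linarith [ha1 m]
                · nlinarith [pow_nonneg (ha0 m) n]
            _ = (1 - a m)⁻¹ := one_div _
        have hlb : ∀ n : ℕ, 0 ≤ A n m := by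
          intro n
          rw [hApt]
          have : 0 ≤ ∑ k ∈ Finset.range n, a m ^ k :=
            Finset.sum_nonneg fun k _ => pow_nonneg (ha0 m) k
          positivity
        refine squeeze_zero hlb hub ?_
        exact tendsto_const_div_atTop_nhds_zero_nat _
      simpa using tendsto_nhds_unique hev hlim0
    rw [hy0] at hy
    have hnorm : Tendsto (fun n => ‖A n‖) atTop (nhds 0) := by
      simpa [Function.comp_def] using (continuous_norm.tendsto (0 : ℕ →ᵇ ℝ)).comp hy
    have hev : ∀ᶠ n : ℕ in atTop, ‖A n‖ < 1/2 := by
      have := hnorm (Iio_mem_nhds (by norm_num : (0:ℝ) < 1/2))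
      simpa using this
    obtain ⟨n, hn1, hn2⟩ := (hev.and (eventually_ge_atTop 1)).exists
    -- find m with A n m ≥ 1/2
    set N := 2 * j * n with hN
    set m := 2 * N with hm'
    have hbig : (1:ℝ)/2 ≤ b m ^ N := by
      have hber : 1 + (N:ℝ) * (-(1 / ((m:ℝ)+1))) ≤ (1 + (-(1 / ((m:ℝ)+1)))) ^ N := by
        refine one_add_mul_le_pow ?_ N
        have h1 : 1 / ((m:ℝ)+1) ≤ 1 := by
          rw [div_le_one (hbpos m)]; linarith [Nat.cast_nonneg (α := ℝ) m]
        linarith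
      have hNm : (N:ℝ) / ((m:ℝ)+1) ≤ 1/2 := by
        rw [div_le_div_iff₀ (hbpos m) (by norm_num)]
        have : (m:ℝ) = 2 * N := by rw [hm']; push_cast; ring
        rw [this]; linarith [Nat.cast_nonneg (α := ℝ) N]
      have : b m = 1 + (-(1 / ((m:ℝ)+1))) := by simp [hb]; ring
      rw [this]
      have : (N:ℝ) * (-(1 / ((m:ℝ)+1))) = -((N:ℝ)/((m:ℝ)+1)) := by ring
      nlinarith [hber]
    have hAnm : (1:ℝ)/2 ≤ A n m := by
      rw [hApt]
      have hterm : ∀ k ∈ Finset.range n, b m ^ N ≤ a m ^ k := by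
        intro k hk
        have hk' : k < n := Finset.mem_range.1 hk
        have : a m ^ k = b m ^ (2 * j * k) := by rw [ha, ← pow_mul]
        rw [this]
        exact pow_le_pow_of_le_one (hb0 m) (hb1 m).le (by rw [hN]; exact Nat.mul_le_mul_left _ hk'.le)
      have hsum : (n:ℝ) * b m ^ N ≤ ∑ k ∈ Finset.range n, a m ^ k := by
        calc (n:ℝ) * b m ^ N = ∑ _k ∈ Finset.range n, b m ^ N := by
              rw [Finset.sum_const, Finset.card_range, nsmul_eq_mul]
          _ ≤ _ := Finset.sum_le_sum hterm
      have hn0 : (0:ℝ) < n := by exact_mod_cast hn2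
      calc (1:ℝ)/2 ≤ b m ^ N := hbig
        _ = (n:ℝ)⁻¹ * ((n:ℝ) * b m ^ N) := by field_simp
        _ ≤ (n:ℝ)⁻¹ * ∑ k ∈ Finset.range n, a m ^ k := by
            exact mul_le_mul_of_nonneg_left hsum (by positivity)
    have hle : A n m ≤ ‖A n‖ := (A n).apply_le_norm m
    linarith
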